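/- Any two minimal labelled Gröbner bases of I^[Σ] have the same cardinality. Consequently, I^[Σ] has a finite labelled Gröbner basis if and only if it has a finite minimal labelled Gröbner basis. -/

import Mathlib

open Finsupp

/-- The free algebra `K⟨X⟩`, realized as the monoid algebra of the free monoid. -/
abbrev FreeAlg (K X : Type*) [Field K] := MonoidAlgebra K (FreeMonoid X)

/-- Module monomials `a εᵢ b` of the free bimodule of rank `r`. -/
structure MonMod (X : Type*) (r : ℕ) where
  left : FreeMonoid X
  idx : Fin r
  right : FreeMonoid X

/-- The free bimodule `Σ = (K⟨X⟩ ⊗ K⟨X⟩)^r`, realized as the span of module monomials. -/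
abbrev FreeBimod (K X : Type*) [Field K] (r : ℕ) := MonMod X r →₀ K

/-- Two-sided action of a pair of words on a module monomial: `a·(c εᵢ d)·b = (ac) εᵢ (db)`. -/
def act {X : Type*} {r : ℕ} (a b : FreeMonoid X) (μ : MonMod X r) : MonMod X r :=
  ⟨a * μ.left, μ.idx, μ.right * b⟩

/-- The monomial `w` as an element of the free algebra. -/
noncomputable def mon (K : Type*) [Field K] {X : Type*} (w : FreeMonoid X) : FreeAlg K X :=
  MonoidAlgebra.of K (FreeMonoid X) w

/-- The evaluation homomorphism `Σ → K⟨X⟩`, `εᵢ ↦ fᵢ`. -/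
noncomputable def evalS {K X : Type*} [Field K] {r : ℕ} (F : Fin r → FreeAlg K X)
    (α : FreeBimod K X r) : FreeAlg K X :=
  α.sum fun μ c => c • (mon K μ.left * F μ.idx * mon K μ.right)

section Orders

variable {K X : Type*} [Field K] [LinearOrder (FreeMonoid X)] {r : ℕ}
  [LinearOrder (MonMod X r)]

/-- The signature of a module element: the largest module monomial of its support
(`⊥` for the zero element). -/
noncomputable def sigW (α : FreeBimod K X r) : WithBot (MonMod X r) := α.support.max

/-- The leading monomial of a nonzero polynomial (junk value `1` for `0`). -/
noncomputable def lmon (p : FreeAlg K X) : FreeMonoid X :=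
  if h : p.coeff.support.Nonempty then p.coeff.support.max' h else 1

/-- The leading coefficient. -/
noncomputable def lcoeff (p : FreeAlg K X) : K := p.coeff (lmon p)

/-- The leading term. -/
noncomputable def lterm (p : FreeAlg K X) : FreeAlg K X :=
  MonoidAlgebra.single (lmon p) (lcoeff p)

/-- `f^[α]` is top s-reducible by the set `G^[Σ]`. -/
def TopSRed (G : Set (FreeAlg K X × FreeBimod K X r)) (f : FreeAlg K X)
    (α : FreeBimod K X r) : Prop :=
  ∃ g γ, (g, γ) ∈ G ∧ g ≠ 0 ∧ ∃ a b : FreeMonoid X,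
    a * lmon g * b = lmon f ∧ WithBot.map (act a b) (sigW γ) ≤ sigW α

/-- `f^[α]` is singular top s-reducible by `G^[Σ]`. -/
def SingTopSRed (G : Set (FreeAlg K X × FreeBimod K X r)) (f : FreeAlg K X)
    (α : FreeBimod K X r) : Prop :=
  f ≠ 0 ∧ ∃ g γ, (g, γ) ∈ G ∧ g ≠ 0 ∧ ∃ a b : FreeMonoid X,
    a * lmon g * b = lmon f ∧ WithBot.map (act a b) (sigW γ) = sigW α

/-- `f^[α]` admits a regular s-reduction by `G^[Σ]`. -/
def RegSRedible (G : Set (FreeAlg K X × FreeBimod K X r)) (f : FreeAlg K X)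
    (α : FreeBimod K X r) : Prop :=
  ∃ g γ, (g, γ) ∈ G ∧ g ≠ 0 ∧ ∃ a b : FreeMonoid X,
    a * lmon g * b ∈ f.coeff.support ∧ WithBot.map (act a b) (sigW γ) < sigW α

/-- `f^[α]` admits a regular *top* s-reduction by `G^[Σ]`. -/
def RegTopSRedible (G : Set (FreeAlg K X × FreeBimod K X r)) (f : FreeAlg K X)
    (α : FreeBimod K X r) : Prop :=
  f ≠ 0 ∧ ∃ g γ, (g, γ) ∈ G ∧ g ≠ 0 ∧ ∃ a b : FreeMonoid X,
    a * lmon g * b = lmon f ∧ WithBot.map (act a b) (sigW γ) < sigW α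

/-- Result of one s-reduction step of `f^[α]` by `a g^[γ] b`. -/
noncomputable def sredResult (f : FreeAlg K X) (α : FreeBimod K X r)
    (g : FreeAlg K X) (γ : FreeBimod K X r) (a b : FreeMonoid X) :
    FreeAlg K X × FreeBimod K X r :=
  (f - (f.coeff (a * lmon g * b) * (lcoeff g)⁻¹) • (mon K a * g * mon K b),
   α - (f.coeff (a * lmon g * b) * (lcoeff g)⁻¹) • Finsupp.mapDomain (act a b) γ)

/-- One s-reduction step by `G^[Σ]`. -/
def SRedStep (G : Set (FreeAlg K X × FreeBimod K X r))
    (p q : FreeAlg K X × FreeBimod K X r) : Prop :=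
  ∃ g γ, (g, γ) ∈ G ∧ g ≠ 0 ∧ ∃ a b : FreeMonoid X,
    a * lmon g * b ∈ p.1.coeff.support ∧ WithBot.map (act a b) (sigW γ) ≤ sigW p.2 ∧
    q = sredResult p.1 p.2 g γ a b

/-- One *regular* s-reduction step by `G^[Σ]`. -/
def RegSRedStep (G : Set (FreeAlg K X × FreeBimod K X r))
    (p q : FreeAlg K X × FreeBimod K X r) : Prop :=
  ∃ g γ, (g, γ) ∈ G ∧ g ≠ 0 ∧ ∃ a b : FreeMonoid X,
    a * lmon g * b ∈ p.1.coeff.support ∧ WithBot.map (act a b) (sigW γ) < sigW p.2 ∧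
    q = sredResult p.1 p.2 g γ a b

/-- `p` s-reduces to zero by `G^[Σ]`. -/
def SRedToZero (G : Set (FreeAlg K X × FreeBimod K X r))
    (p : FreeAlg K X × FreeBimod K X r) : Prop :=
  ∃ σ : FreeBimod K X r, Relation.ReflTransGen (SRedStep G) p (0, σ)

/-- `p` regular s-reduces to zero by `G^[Σ]`. -/
def RegSRedToZero (G : Set (FreeAlg K X × FreeBimod K X r))
    (p : FreeAlg K X × FreeBimod K X r) : Prop :=
  ∃ σ : FreeBimod K X r, Relation.ReflTransGen (RegSRedStep G) p (0, σ)

/-- `G^[Σ] ⊆ I^[Σ]`: labelled polynomials with nonzero polynomial part. -/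
def InLab (F : Fin r → FreeAlg K X) (G : Set (FreeAlg K X × FreeBimod K X r)) : Prop :=
  ∀ p ∈ G, p.1 = evalS F p.2 ∧ p.1 ≠ 0

/-- `G^[Σ]` is a labelled Gröbner basis of `I^[Σ]`. -/
def LabGB (F : Fin r → FreeAlg K X) (G : Set (FreeAlg K X × FreeBimod K X r)) : Prop :=
  InLab F G ∧ ∀ (f : FreeAlg K X) (α : FreeBimod K X r), f = evalS F α → SRedToZero G (f, α)

/-- `G^[Σ]` is a labelled Gröbner basis of `I^[Σ]` up to signature `σ`. -/
def LabGBUpTo (F : Fin r → FreeAlg K X) (G : Set (FreeAlg K X × FreeBimod K X r))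
    (σ : MonMod X r) : Prop :=
  InLab F G ∧ ∀ (f : FreeAlg K X) (α : FreeBimod K X r), f = evalS F α →
    sigW α < (σ : WithBot (MonMod X r)) → SRedToZero G (f, α)

/-- `G^[Σ]` is a *minimal* labelled Gröbner basis of `I^[Σ]`. -/
def MinLabGB (F : Fin r → FreeAlg K X) (G : Set (FreeAlg K X × FreeBimod K X r)) : Prop :=
  LabGB F G ∧ ∀ p ∈ G, ¬ TopSRed (G \ {p}) p.1 p.2

end Orders

section AuxLemmas

variable {K X : Type*} [Field K] [LinearOrder (FreeMonoid X)] {r : ℕ}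
  [LinearOrder (MonMod X r)] {F : Fin r → FreeAlg K X}

/-! ### Free monoid and monomial basics -/

lemma FM.cancel {a b u v : FreeMonoid X} (h : a * u * b = a * v * b) : u = v :=
  mul_left_cancel (mul_right_cancel h)

lemma wmul_lt (hmon : ∀ a b u v : FreeMonoid X, u ≤ v → a * u * b ≤ a * v * b)
    {a b u v : FreeMonoid X} (h : u < v) : a * u * b < a * v * b :=
  lt_of_le_of_ne (hmon a b u v h.le) fun he => h.ne (FM.cancel he)

lemma conj_eq_mapDomain (a b : FreeMonoid X) (g : FreeAlg K X) :
    (mon K a * g * mon K b).coeff = Finsupp.mapDomain (fun u => a * u * b) g.coeff := by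
  induction g using MonoidAlgebra.induction_linear with
  | zero => simp
  | add f g hf hg =>
      rw [mul_add, add_mul, MonoidAlgebra.coeff_add, hf, hg, MonoidAlgebra.coeff_add,
        Finsupp.mapDomain_add]
  | single u c =>
      rw [MonoidAlgebra.coeff_single, Finsupp.mapDomain_single]
      rw [mon, MonoidAlgebra.of_apply, mon, MonoidAlgebra.of_apply,
        MonoidAlgebra.single_mul_single, MonoidAlgebra.single_mul_single, one_mul, mul_one]
      rfl

lemma lmon_mem_support {f : FreeAlg K X} (hf : f ≠ 0) : lmon f ∈ f.coeff.support := by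
  rw [lmon, dif_pos (Finsupp.support_nonempty_iff.2 (mt MonoidAlgebra.coeff_eq_zero.1 hf))]; exact Finset.max'_mem _ _

lemma le_lmon {f : FreeAlg K X} {m : FreeMonoid X} (hm : m ∈ f.coeff.support) : m ≤ lmon f := by
  rw [lmon, dif_pos ⟨m, hm⟩]; exact Finset.le_max' _ _ hm

lemma lmon_le {f : FreeAlg K X} (hf : f ≠ 0) {w : FreeMonoid X}
    (h : ∀ m ∈ f.coeff.support, m ≤ w) : lmon f ≤ w := by
  rw [lmon, dif_pos (Finsupp.support_nonempty_iff.2 (mt MonoidAlgebra.coeff_eq_zero.1 hf))]; exact Finset.max'_le _ _ _ h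

lemma lcoeff_ne_zero {f : FreeAlg K X} (hf : f ≠ 0) : lcoeff f ≠ 0 :=
  Finsupp.mem_support_iff.1 (lmon_mem_support hf)

lemma conj_support_le (hmon : ∀ a b u v : FreeMonoid X, u ≤ v → a * u * b ≤ a * v * b)
    {g : FreeAlg K X} (a b : FreeMonoid X) {m : FreeMonoid X}
    (hm : m ∈ (mon K a * g * mon K b).coeff.support) : m ≤ a * lmon g * b := by
  rw [conj_eq_mapDomain] at hm
  obtain ⟨u, hu, rfl⟩ := Finset.mem_image.1 (Finsupp.mapDomain_support hm)
  exact hmon a b _ _ (le_lmon hu)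

lemma conj_apply (a b : FreeMonoid X) (g : FreeAlg K X) (u : FreeMonoid X) :
    (mon K a * g * mon K b).coeff (a * u * b) = g.coeff u := by
  rw [conj_eq_mapDomain]
  exact Finsupp.mapDomain_apply (fun x y h => FM.cancel h) g.coeff u

lemma conj_apply_of_gt (hmon : ∀ a b u v : FreeMonoid X, u ≤ v → a * u * b ≤ a * v * b)
    {g : FreeAlg K X} (a b : FreeMonoid X) {w : FreeMonoid X}
    (hw : a * lmon g * b < w) : (mon K a * g * mon K b).coeff w = 0 := by
  by_contra h
  exact absurd (conj_support_le hmon a b (Finsupp.mem_support_iff.2 h)) (not_le.2 hw)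

/-! ### Signature basics -/

lemma sigW_sub_smul_le (hmod : ∀ (a b : FreeMonoid X) (μ ν : MonMod X r), μ ≤ ν → act a b μ ≤ act a b ν)
    (α : FreeBimod K X r) (c : K) (a b : FreeMonoid X) (γ : FreeBimod K X r) :
    sigW (α - c • Finsupp.mapDomain (act a b) γ) ≤ sigW α ⊔ WithBot.map (act a b) (sigW γ) := by
  refine le_trans (Finset.max_mono Finsupp.support_sub) ?_
  rw [Finset.max_union]
  refine sup_le_sup le_rfl (le_trans (Finset.max_mono Finsupp.support_smul) ?_)
  apply Finset.max_le
  intro μ hμ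
  obtain ⟨ν, hν, rfl⟩ := Finset.mem_image.1 (Finsupp.mapDomain_support hμ)
  have hne : γ.support.Nonempty := ⟨ν, hν⟩
  rw [sigW, ← Finset.coe_max' hne, WithBot.map_coe, WithBot.coe_le_coe]
  exact hmod a b _ _ (Finset.le_max' _ _ hν)

lemma mapWB_mono (hmod : ∀ (a b : FreeMonoid X) (μ ν : MonMod X r), μ ≤ ν → act a b μ ≤ act a b ν)
    (a b : FreeMonoid X) {s t : WithBot (MonMod X r)} (h : s ≤ t) :
    WithBot.map (act a b) s ≤ WithBot.map (act a b) t := by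
  cases s with
  | bot => exact bot_le
  | coe x =>
    cases t with
    | bot => exact absurd h (by simp)
    | coe y =>
      rw [WithBot.map_coe, WithBot.map_coe, WithBot.coe_le_coe]
      exact hmod a b _ _ (WithBot.coe_le_coe.1 h)

lemma act_one_one (μ : MonMod X r) : act (1 : FreeMonoid X) 1 μ = μ := by
  cases μ; simp [act]

lemma act_comp (a b a' b' : FreeMonoid X) (μ : MonMod X r) :
    act a b (act a' b' μ) = act (a * a') (b' * b) μ := by
  cases μ; simp [act, mul_assoc]

lemma mapWB_one (s : WithBot (MonMod X r)) :
    WithBot.map (act (1 : FreeMonoid X) 1) s = s := by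
  cases s with
  | bot => rfl
  | coe x => rw [WithBot.map_coe, act_one_one]

lemma mapWB_comp (a b a' b' : FreeMonoid X) (s : WithBot (MonMod X r)) :
    WithBot.map (act (a * a') (b' * b)) s = WithBot.map (act a b) (WithBot.map (act a' b') s) := by
  cases s with
  | bot => rfl
  | coe x => rw [WithBot.map_coe, WithBot.map_coe, WithBot.map_coe, act_comp]

end AuxLemmas

section AuxLemmas2
set_option linter.unusedSectionVars false

variable {K X : Type*} [Field K] [LinearOrder (FreeMonoid X)] {r : ℕ}
  [LinearOrder (MonMod X r)] {F : Fin r → FreeAlg K X}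

lemma evalS_eq (F : Fin r → FreeAlg K X) (α : FreeBimod K X r) :
    evalS F α = Finsupp.linearCombination K
      (fun μ : MonMod X r => mon K μ.left * F μ.idx * mon K μ.right) α := by
  rw [Finsupp.linearCombination_apply]; rfl

lemma evalS_sub (F : Fin r → FreeAlg K X) (α β : FreeBimod K X r) :
    evalS F (α - β) = evalS F α - evalS F β := by
  simp [evalS_eq, map_sub]

lemma evalS_smul (F : Fin r → FreeAlg K X) (c : K) (α : FreeBimod K X r) :
    evalS F (c • α) = c • evalS F α := by
  simp [evalS_eq, map_smul]

lemma evalS_mapDomain (F : Fin r → FreeAlg K X) (a b : FreeMonoid X) (γ : FreeBimod K X r) :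
    evalS F (Finsupp.mapDomain (act a b) γ) = mon K a * evalS F γ * mon K b := by
  rw [evalS_eq, Finsupp.linearCombination_mapDomain, evalS_eq,
    Finsupp.linearCombination_apply, Finsupp.linearCombination_apply,
    Finsupp.sum, Finsupp.sum, Finset.mul_sum, Finset.sum_mul]
  refine Finset.sum_congr rfl fun μ _ => ?_
  cases μ
  simp only [Function.comp_apply, act, mon, map_mul, mul_smul_comm, smul_mul_assoc, mul_assoc]

end AuxLemmas2

section AuxLemmas3
set_option linter.unusedSectionVars false

variable {K X : Type*} [Field K] [LinearOrder (FreeMonoid X)] {r : ℕ}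
  [LinearOrder (MonMod X r)] {F : Fin r → FreeAlg K X}

lemma sredStep_sig
    (hmod : ∀ (a b : FreeMonoid X) (μ ν : MonMod X r), μ ≤ ν → act a b μ ≤ act a b ν)
    {G : Set (FreeAlg K X × FreeBimod K X r)} {p q : FreeAlg K X × FreeBimod K X r}
    (h : SRedStep G p q) : sigW q.2 ≤ sigW p.2 := by
  obtain ⟨g, γ, _, _, a, b, _, hsig, rfl⟩ := h
  refine le_trans (sigW_sub_smul_le hmod _ _ _ _ _) (sup_le le_rfl hsig)

lemma topSRed_of_chain
    (hmon : ∀ a b u v : FreeMonoid X, u ≤ v → a * u * b ≤ a * v * b)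
    (hmod : ∀ (a b : FreeMonoid X) (μ ν : MonMod X r), μ ≤ ν → act a b μ ≤ act a b ν)
    {G : Set (FreeAlg K X × FreeBimod K X r)} {p : FreeAlg K X × FreeBimod K X r}
    {σ : FreeBimod K X r} (h : Relation.ReflTransGen (SRedStep G) p (0, σ)) :
    p.1 ≠ 0 → TopSRed G p.1 p.2 := by
  induction h using Relation.ReflTransGen.head_induction_on with
  | refl => exact fun h0 => absurd rfl h0
  | head hstep hchain ih =>
    intro hne
    rename_i p q
    have hqsig : sigW q.2 ≤ sigW p.2 := sredStep_sig hmod hstep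
    obtain ⟨g, γ, hgG, hg0, a, b, hmem, hsig, heq⟩ := hstep
    by_cases hc : a * lmon g * b = lmon p.1
    · exact ⟨g, γ, hgG, hg0, a, b, hc, hsig⟩
    · -- the step happens strictly below the leading monomial
      have hmle : a * lmon g * b ≤ lmon p.1 := le_lmon hmem
      have hmlt : a * lmon g * b < lmon p.1 := lt_of_le_of_ne hmle hc
      have hcval : (mon K a * g * mon K b).coeff (lmon p.1) = 0 := conj_apply_of_gt hmon a b hmlt
      have hq1 : q.1 = p.1 - (p.1.coeff (a * lmon g * b) * (lcoeff g)⁻¹) • (mon K a * g * mon K b) := by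
        rw [heq]; rfl
      have hval : q.1.coeff (lmon p.1) = p.1.coeff (lmon p.1) := by
        rw [hq1, MonoidAlgebra.coeff_sub, Finsupp.sub_apply, MonoidAlgebra.coeff_smul, Finsupp.smul_apply, hcval, smul_zero, sub_zero]
      have hne' : q.1 ≠ 0 := by
        intro h0
        rw [h0] at hval
        exact Finsupp.mem_support_iff.1 (lmon_mem_support hne) hval.symm
      have hsupp : ∀ m ∈ q.1.coeff.support, m ≤ lmon p.1 := by
        intro m hm
        rw [hq1, MonoidAlgebra.coeff_sub] at hm
        rcases Finset.mem_union.1 (Finsupp.support_sub hm) with h1 | h2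
        · exact le_lmon h1
        · exact le_trans (conj_support_le hmon a b (Finsupp.support_smul (h2 : _ ∈ (_ • (mon K a * g * mon K b).coeff).support))) hmle
      have hlmq : lmon q.1 = lmon p.1 := by
        refine le_antisymm (lmon_le hne' hsupp) ?_
        exact le_lmon (Finsupp.mem_support_iff.2 (by
          rw [hval]; exact Finsupp.mem_support_iff.1 (lmon_mem_support hne)))
      obtain ⟨g', γ', hg'G, hg'0, a', b', hab', hsig'⟩ := ih hne'
      exact ⟨g', γ', hg'G, hg'0, a', b', by rw [hab', hlmq], le_trans hsig' hqsig⟩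

lemma labGB_topSRed
    (hmon : ∀ a b u v : FreeMonoid X, u ≤ v → a * u * b ≤ a * v * b)
    (hmod : ∀ (a b : FreeMonoid X) (μ ν : MonMod X r), μ ≤ ν → act a b μ ≤ act a b ν)
    {G : Set (FreeAlg K X × FreeBimod K X r)} (hG : LabGB F G)
    {f : FreeAlg K X} {α : FreeBimod K X r} (hfα : f = evalS F α) (hf : f ≠ 0) :
    TopSRed G f α := by
  obtain ⟨σ, hchain⟩ := hG.2 f α hfα
  exact topSRed_of_chain hmon hmod hchain hf

end AuxLemmas3

section AuxLemmas4
set_option linter.unusedSectionVars false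

variable {K X : Type*} [Field K] [LinearOrder (FreeMonoid X)] {r : ℕ}
  [LinearOrder (MonMod X r)] {F : Fin r → FreeAlg K X}

lemma labGB_of_top [WellFoundedLT (FreeMonoid X)]
    (hmon : ∀ a b u v : FreeMonoid X, u ≤ v → a * u * b ≤ a * v * b)
    {G : Set (FreeAlg K X × FreeBimod K X r)} (hIn : InLab F G)
    (hT : ∀ (f : FreeAlg K X) (α : FreeBimod K X r), f = evalS F α → f ≠ 0 → TopSRed G f α) :
    LabGB F G := by
  refine ⟨hIn, ?_⟩
  suffices main : ∀ w : FreeMonoid X, ∀ (f : FreeAlg K X) (α : FreeBimod K X r),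
      lmon f = w → f = evalS F α → SRedToZero G (f, α) by
    intro f α hfα; exact main (lmon f) f α rfl hfα
  intro w
  induction w using WellFoundedLT.induction with
  | ind w ih =>
    rintro f α rfl hfα
    by_cases hf : f = 0
    · subst hf; exact ⟨α, Relation.ReflTransGen.refl⟩
    · obtain ⟨g, γ, hgG, hg0, a, b, hab, hsig⟩ := hT f α hfα hf
      set q := sredResult f α g γ a b with hq
      have hstep : SRedStep G (f, α) q :=
        ⟨g, γ, hgG, hg0, a, b, by rw [hab]; exact lmon_mem_support hf, hsig, rfl⟩
      have hgev : g = evalS F γ := (hIn (g, γ) hgG).1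
      have hq1 : q.1 = f - (f.coeff (a * lmon g * b) * (lcoeff g)⁻¹) • (mon K a * g * mon K b) := rfl
      have hq2 : q.2 = α - (f.coeff (a * lmon g * b) * (lcoeff g)⁻¹) • Finsupp.mapDomain (act a b) γ := rfl
      have hqe : q.1 = evalS F q.2 := by
        rw [hq1, hq2, evalS_sub, evalS_smul, evalS_mapDomain, ← hgev, ← hfα]
      have hlm0 : q.1.coeff (lmon f) = 0 := by
        rw [hq1, MonoidAlgebra.coeff_sub, Finsupp.sub_apply, MonoidAlgebra.coeff_smul, Finsupp.smul_apply, ← hab, conj_apply, hab]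
        have : g.coeff (lmon g) = lcoeff g := rfl
        rw [this, smul_eq_mul, mul_assoc, inv_mul_cancel₀ (lcoeff_ne_zero hg0), mul_one, sub_self]
      have hle : ∀ m ∈ q.1.coeff.support, m ≤ lmon f := by
        intro m hm
        rw [hq1, MonoidAlgebra.coeff_sub] at hm
        rcases Finset.mem_union.1 (Finsupp.support_sub hm) with h1 | h2
        · exact le_lmon h1
        · exact le_trans (conj_support_le hmon a b (Finsupp.support_smul (h2 : _ ∈ (_ • (mon K a * g * mon K b).coeff).support))) (le_of_eq hab)
      by_cases hq0 : q.1 = 0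
      · have hqeq : q = ((0 : FreeAlg K X), q.2) := Prod.ext hq0 rfl
        exact ⟨q.2, hqeq ▸ Relation.ReflTransGen.single hstep⟩
      · have hlt : lmon q.1 < lmon f := by
          refine lt_of_le_of_ne (lmon_le hq0 hle) fun heq => ?_
          exact Finsupp.mem_support_iff.1 (heq ▸ lmon_mem_support hq0) hlm0
        obtain ⟨σ, hch⟩ := ih (lmon q.1) hlt q.1 q.2 rfl hqe
        exact ⟨σ, Relation.ReflTransGen.head hstep hch⟩

end AuxLemmas4

section AuxLemmas5
set_option linter.unusedSectionVars false

variable {K X : Type*} [Field K] [LinearOrder (FreeMonoid X)] {r : ℕ}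
  [LinearOrder (MonMod X r)] {F : Fin r → FreeAlg K X}

lemma match_lemma
    (hmon : ∀ a b u v : FreeMonoid X, u ≤ v → a * u * b ≤ a * v * b)
    (hmod : ∀ (a b : FreeMonoid X) (μ ν : MonMod X r), μ ≤ ν → act a b μ ≤ act a b ν)
    {G H : Set (FreeAlg K X × FreeBimod K X r)} (hG : MinLabGB F G) (hH : LabGB F H)
    {p : FreeAlg K X × FreeBimod K X r} (hp : p ∈ G) :
    ∃ q ∈ H, lmon q.1 = lmon p.1 ∧ sigW q.2 = sigW p.2 := by
  obtain ⟨hpe, hpne⟩ := hG.1.1 p hp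
  obtain ⟨h, δ, hhH, hh0, a, b, hab, hsig⟩ := labGB_topSRed hmon hmod hH hpe hpne
  obtain ⟨hhe, hhne⟩ := hH.1 (h, δ) hhH
  obtain ⟨g', γ', hg'G, hg'0, a', b', hab', hsig'⟩ := labGB_topSRed hmon hmod hG.1 hhe hhne
  have hcomp1 : (a * a') * lmon g' * (b' * b) = lmon p.1 := by
    rw [← hab, ← hab']; simp only [mul_assoc]
  have hcomp2 : WithBot.map (act (a * a') (b' * b)) (sigW γ') ≤ sigW p.2 := by
    rw [mapWB_comp]
    exact le_trans (mapWB_mono hmod a b hsig') hsig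
  have hgp : (g', γ') = p := by
    by_contra hne
    exact hG.2 p hp ⟨g', γ', ⟨hg'G, by simp [hne]⟩, hg'0, _, _, hcomp1, hcomp2⟩
  have hg'1 : g' = p.1 := congrArg Prod.fst hgp
  have hγ'2 : γ' = p.2 := congrArg Prod.snd hgp
  rw [hg'1] at hcomp1
  have hlen := congrArg FreeMonoid.length hcomp1
  simp only [FreeMonoid.length_mul] at hlen
  have ha : a = 1 := FreeMonoid.length_eq_zero.1 (by omega)
  have ha' : a' = 1 := FreeMonoid.length_eq_zero.1 (by omega)
  have hb : b = 1 := FreeMonoid.length_eq_zero.1 (by omega)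
  have hb' : b' = 1 := FreeMonoid.length_eq_zero.1 (by omega)
  refine ⟨(h, δ), hhH, ?_, ?_⟩
  · rw [← hab', hg'1, ha', hb', one_mul, mul_one]
  · refine le_antisymm ?_ ?_
    · have := hsig; rw [ha, hb, mapWB_one] at this; exact this
    · have := hsig'; rw [ha', hb', mapWB_one, hγ'2] at this; exact this

lemma minimal_inj {G : Set (FreeAlg K X × FreeBimod K X r)} (hG : MinLabGB F G)
    {p q : FreeAlg K X × FreeBimod K X r} (hp : p ∈ G) (hq : q ∈ G)
    (h1 : lmon q.1 = lmon p.1) (h2 : sigW q.2 = sigW p.2) : p = q := by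
  by_contra hne
  refine hG.2 p hp ⟨q.1, q.2, ⟨hq, by simp [Ne.symm hne]⟩, (hG.1.1 q hq).2, 1, 1, ?_, ?_⟩
  · rw [one_mul, mul_one, h1]
  · rw [mapWB_one, h2]

lemma card_le_card
    (hmon : ∀ a b u v : FreeMonoid X, u ≤ v → a * u * b ≤ a * v * b)
    (hmod : ∀ (a b : FreeMonoid X) (μ ν : MonMod X r), μ ≤ ν → act a b μ ≤ act a b ν)
    {G H : Set (FreeAlg K X × FreeBimod K X r)} (hG : MinLabGB F G) (hH : MinLabGB F H) :
    Cardinal.mk ↥G ≤ Cardinal.mk ↥H := by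
  choose φ hφH hlm hsig using fun p : ↥G => match_lemma hmon hmod hG hH.1 p.2
  refine Cardinal.mk_le_of_injective (f := fun p => (⟨φ p, hφH p⟩ : ↥H)) ?_
  intro p1 p2 hpq
  have hφ : φ p1 = φ p2 := congrArg Subtype.val hpq
  refine Subtype.ext (minimal_inj hG p1.2 p2.2 ?_ ?_)
  · rw [← hlm p1, ← hlm p2, hφ]
  · rw [← hsig p1, ← hsig p2, hφ]

lemma top_remove
    (hmod : ∀ (a b : FreeMonoid X) (μ ν : MonMod X r), μ ≤ ν → act a b μ ≤ act a b ν)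
    {G : Set (FreeAlg K X × FreeBimod K X r)} {p : FreeAlg K X × FreeBimod K X r}
    (hT : ∀ (f : FreeAlg K X) (α : FreeBimod K X r), f = evalS F α → f ≠ 0 → TopSRed G f α)
    (hred : TopSRed (G \ {p}) p.1 p.2) :
    ∀ (f : FreeAlg K X) (α : FreeBimod K X r), f = evalS F α → f ≠ 0 → TopSRed (G \ {p}) f α := by
  intro f α hfα hf
  obtain ⟨g, γ, hgG, hg0, a, b, hab, hsig⟩ := hT f α hfα hf
  by_cases hgp : (g, γ) = p
  · obtain ⟨g', γ', hg'G, hg'0, a', b', hab', hsig'⟩ := hred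
    refine ⟨g', γ', hg'G, hg'0, a * a', b' * b, ?_, ?_⟩
    · have : (a * a') * lmon g' * (b' * b) = a * (a' * lmon g' * b') * b := by
        simp only [mul_assoc]
      rw [this, hab', ← congrArg Prod.fst hgp, hab]
    · rw [mapWB_comp]
      have h1 : WithBot.map (act a b) (WithBot.map (act a' b') (sigW γ'))
          ≤ WithBot.map (act a b) (sigW p.2) := mapWB_mono hmod a b hsig'
      have h2 : WithBot.map (act a b) (sigW p.2) ≤ sigW α := by
        rw [← congrArg Prod.snd hgp]; exact hsig
      exact le_trans h1 h2
  · exact ⟨g, γ, ⟨hgG, by simp [hgp]⟩, hg0, a, b, hab, hsig⟩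

end AuxLemmas5

/-- Any two minimal labelled Gröbner bases of `I^[Σ]` have the same cardinality.
Consequently, `I^[Σ]` has a finite labelled Gröbner basis iff it has a finite minimal
labelled Gröbner basis. -/
theorem minimal_labGB_cardinality {K X : Type*} [Field K] {r : ℕ}
    [LinearOrder (FreeMonoid X)] [WellFoundedLT (FreeMonoid X)]
    [LinearOrder (MonMod X r)] [WellFoundedLT (MonMod X r)]
    (hmon : ∀ a b u v : FreeMonoid X, u ≤ v → a * u * b ≤ a * v * b)
    (hmod : ∀ (a b : FreeMonoid X) (μ ν : MonMod X r), μ ≤ ν → act a b μ ≤ act a b ν)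
    (hcomp : ∀ (u v : FreeMonoid X) (i : Fin r),
      (u ≤ v ↔ (⟨u, i, 1⟩ : MonMod X r) ≤ ⟨v, i, 1⟩) ∧
      (u ≤ v ↔ (⟨1, i, u⟩ : MonMod X r) ≤ ⟨1, i, v⟩))
    (F : Fin r → FreeAlg K X) :
    (∀ G H : Set (FreeAlg K X × FreeBimod K X r),
      MinLabGB F G → MinLabGB F H → Cardinal.mk ↥G = Cardinal.mk ↥H) ∧
    ((∃ G : Set (FreeAlg K X × FreeBimod K X r), LabGB F G ∧ G.Finite) ↔
      (∃ G : Set (FreeAlg K X × FreeBimod K X r), MinLabGB F G ∧ G.Finite)) := by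
  constructor
  · intro G H hG hH
    exact le_antisymm (card_le_card hmon hmod hG hH) (card_le_card hmon hmod hH hG)
  · constructor
    · rintro ⟨G, hGB, hfin⟩
      have key : ∀ (n : ℕ) (G : Set (FreeAlg K X × FreeBimod K X r)), G.Finite →
          G.ncard = n → LabGB F G →
          ∃ G' : Set (FreeAlg K X × FreeBimod K X r), MinLabGB F G' ∧ G'.Finite := by
        intro n
        induction n using Nat.strong_induction_on with
        | _ n ih =>
          intro G hfin hcard hGB
          by_cases hmin : ∀ p ∈ G, ¬ TopSRed (G \ {p}) p.1 p.2
          · exact ⟨G, ⟨hGB, hmin⟩, hfin⟩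
          · push_neg at hmin
            obtain ⟨p, hp, hred⟩ := hmin
            have hT : ∀ (f : FreeAlg K X) (α : FreeBimod K X r),
                f = evalS F α → f ≠ 0 → TopSRed G f α :=
              fun f α h1 h2 => labGB_topSRed hmon hmod hGB h1 h2
            have hGB' : LabGB F (G \ {p}) :=
              labGB_of_top hmon (fun q hq => hGB.1 q hq.1) (top_remove hmod hT hred)
            have hlt : (G \ {p}).ncard < n :=
              hcard ▸ Set.ncard_diff_singleton_lt_of_mem hp hfin
            exact ih _ hlt _ hfin.sdiff rfl hGB'
      exact key G.ncard G hfin rfl hGB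
    · rintro ⟨G, hGB, hfin⟩
      exact ⟨G, hGB.1, hfin⟩
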